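/- For every n and every k with 0 ≤ k ≤ n, the width of any nondeterministic unitary OBDD computing EXACT_n^k (the function that is 1 iff the input has exactly k ones) is at least max{k+1, n−k+1}. -/

import Mathlib

open scoped BigOperators

/-- State of a nondeterministic unitary OBDD of width `d` after reading input `x`
in variable order `π`: at step `j` the unitary `U j b` is applied, where `b` is the
value of the tested variable `x_{π j}`. -/
noncomputable def nuRun {n d : ℕ} (U : Fin n → Bool → Matrix (Fin d) (Fin d) ℂ)
    (π : Equiv.Perm (Fin n)) (init : Fin d → ℂ) (x : Fin n → Bool) : Fin d → ℂ :=
  (List.ofFn fun j : Fin n => U j (x (π j))).foldl (fun v M => M.mulVec v) init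

/-- All transition matrices are unitary. -/
def IsUnitaryFamily {n d : ℕ} (U : Fin n → Bool → Matrix (Fin d) (Fin d) ℂ) : Prop :=
  ∀ j b, U j b ∈ Matrix.unitaryGroup (Fin d) ℂ

/-- The initial state is a unit vector. -/
def NormalizedInit {d : ℕ} (init : Fin d → ℂ) : Prop :=
  ∑ q, ‖init q‖ ^ 2 = 1

/-- Nondeterministic acceptance: the projection of the final state onto the
accepting subspace (spanned by the accepting basis states `acc`) is nonzero. -/
def nuAccepts {n d : ℕ} (U : Fin n → Bool → Matrix (Fin d) (Fin d) ℂ)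
    (π : Equiv.Perm (Fin n)) (init : Fin d → ℂ) (acc : Finset (Fin d))
    (x : Fin n → Bool) : Prop :=
  ∃ q ∈ acc, nuRun U π init x q ≠ 0

/-- The NUOBDD computes `f`: it accepts exactly the inputs in `f⁻¹(1)`. -/
def nuComputes {n d : ℕ} (U : Fin n → Bool → Matrix (Fin d) (Fin d) ℂ)
    (π : Equiv.Perm (Fin n)) (init : Fin d → ℂ) (acc : Finset (Fin d))
    (f : (Fin n → Bool) → Bool) : Prop :=
  ∀ x, nuAccepts U π init acc x ↔ f x = true

/-- Number of 1s in the input. -/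
def countOnes {n : ℕ} (x : Fin n → Bool) : ℕ :=
  (Finset.univ.filter fun i => x i = true).card

/-- `EXACT_n^k(σ) = 1` iff `σ` has exactly `k` ones. -/
def EXACT (n k : ℕ) (x : Fin n → Bool) : Bool := decide (countOnes x = k)

namespace NUOBDDAux

variable {n d : ℕ}

noncomputable def Lmat (U : Fin n → Bool → Matrix (Fin d) (Fin d) ℂ) (bits : Fin n → Bool) :
    List (Matrix (Fin d) (Fin d) ℂ) := List.ofFn fun j => U j (bits j)

noncomputable def pre (U : Fin n → Bool → Matrix (Fin d) (Fin d) ℂ) (init : Fin d → ℂ)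
    (bits : Fin n → Bool) (m : ℕ) : Fin d → ℂ :=
  ((Lmat U bits).take m).foldl (fun v M => M.mulVec v) init

noncomputable def suf (U : Fin n → Bool → Matrix (Fin d) (Fin d) ℂ)
    (bits : Fin n → Bool) (m : ℕ) : Matrix (Fin d) (Fin d) ℂ :=
  ((Lmat U bits).drop m).foldl (fun A M => M * A) 1

lemma foldl_mul_eq (L : List (Matrix (Fin d) (Fin d) ℂ)) (A : Matrix (Fin d) (Fin d) ℂ) :
    L.foldl (fun A M => M * A) A = L.foldl (fun A M => M * A) 1 * A := by
  induction L generalizing A with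
  | nil => simp
  | cons N L ih =>
      simp only [List.foldl_cons]
      rw [ih (N * A), ih (N * 1)]
      simp [mul_assoc]

lemma foldl_mulVec_eq (L : List (Matrix (Fin d) (Fin d) ℂ)) (v : Fin d → ℂ) :
    L.foldl (fun v M => M.mulVec v) v = (L.foldl (fun A M => M * A) 1).mulVec v := by
  induction L generalizing v with
  | nil => simp [Matrix.one_mulVec]
  | cons N L ih =>
      simp only [List.foldl_cons]
      rw [ih (N.mulVec v), foldl_mul_eq L (N * 1)]
      simp [Matrix.mulVec_mulVec, mul_assoc]

lemma nuRun_eq (U : Fin n → Bool → Matrix (Fin d) (Fin d) ℂ) (π : Equiv.Perm (Fin n))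
    (init : Fin d → ℂ) (bits : Fin n → Bool) (m : ℕ) :
    nuRun U π init (fun i => bits (π.symm i)) = (suf U bits m).mulVec (pre U init bits m) := by
  have hL : (List.ofFn fun j : Fin n => U j ((fun i => bits (π.symm i)) (π j))) = Lmat U bits := by
    simp [Lmat]
  rw [nuRun, hL, pre, suf]
  conv_lhs => rw [← List.take_append_drop m (Lmat U bits)]
  rw [List.foldl_append, foldl_mulVec_eq]

lemma pre_congr (U : Fin n → Bool → Matrix (Fin d) (Fin d) ℂ) (init : Fin d → ℂ)
    {bits bits' : Fin n → Bool} (m : ℕ)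
    (h : ∀ i : Fin n, (i : ℕ) < m → bits i = bits' i) :
    pre U init bits m = pre U init bits' m := by
  have : (Lmat U bits).take m = (Lmat U bits').take m := by
    apply List.ext_getElem
    · simp [Lmat]
    · intro i h1 h2
      simp only [Lmat, List.getElem_take, List.getElem_ofFn]
      have hi : i < m := by
        simp only [Lmat, List.length_take, List.length_ofFn] at h1
        omega
      have hin : i < n := by
        simp only [Lmat, List.length_take, List.length_ofFn] at h1
        omega
      exact congrArg (U ⟨i, hin⟩) (h ⟨i, hin⟩ hi)
  rw [pre, pre, this]

lemma suf_congr (U : Fin n → Bool → Matrix (Fin d) (Fin d) ℂ)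
    {bits bits' : Fin n → Bool} (m : ℕ)
    (h : ∀ i : Fin n, m ≤ (i : ℕ) → bits i = bits' i) :
    suf U bits m = suf U bits' m := by
  have : (Lmat U bits).drop m = (Lmat U bits').drop m := by
    apply List.ext_getElem
    · simp [Lmat]
    · intro i h1 h2
      simp only [Lmat, List.getElem_drop, List.getElem_ofFn]
      have hin : m + i < n := by
        simp only [Lmat, List.length_drop, List.length_ofFn] at h1
        omega
      exact congrArg (U ⟨m + i, hin⟩) (h ⟨m + i, hin⟩ (Nat.le_add_right m i))
  rw [suf, suf, this]

lemma pre_succ (U : Fin n → Bool → Matrix (Fin d) (Fin d) ℂ) (init : Fin d → ℂ)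
    (bits : Fin n → Bool) {m : ℕ} (hm : m < n) :
    pre U init bits (m + 1) = (U ⟨m, hm⟩ (bits ⟨m, hm⟩)).mulVec (pre U init bits m) := by
  have hlen : m < (Lmat U bits).length := by simpa [Lmat] using hm
  have : (Lmat U bits)[m]? = some ((Lmat U bits)[m]) := List.getElem?_eq_getElem hlen
  rw [pre, pre, List.take_succ, this]
  simp only [Option.toList_some, List.foldl_append, List.foldl_cons, List.foldl_nil]
  simp [Lmat]

lemma pre_zero (U : Fin n → Bool → Matrix (Fin d) (Fin d) ℂ) (init : Fin d → ℂ)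
    (bits : Fin n → Bool) : pre U init bits 0 = init := by simp [pre]

lemma countOnes_comp_symm (π : Equiv.Perm (Fin n)) (bits : Fin n → Bool) :
    countOnes (fun i => bits (π.symm i)) = countOnes bits := by
  rw [countOnes, countOnes, ← Fintype.card_subtype, ← Fintype.card_subtype]
  exact Fintype.card_congr (π.symm.subtypeEquiv fun i => Iff.rfl)

lemma countOnes_decide (P : ℕ → Prop) [DecidablePred P] :
    countOnes (fun i : Fin n => decide (P (i : ℕ))) = ((Finset.range n).filter P).card := by
  rw [countOnes]
  apply Finset.card_bij (fun (a : Fin n) _ => (a : ℕ))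
  · intro a ha
    simp only [Finset.mem_filter, Finset.mem_univ, true_and, decide_eq_true_eq] at ha
    simp [Finset.mem_filter, Finset.mem_range, a.isLt, ha]
  · intro a _ b _ h
    exact Fin.val_injective h
  · intro b hb
    simp only [Finset.mem_filter, Finset.mem_range] at hb
    exact ⟨⟨b, hb.1⟩, by simp [hb.2], rfl⟩

lemma countOnes_le (x : Fin n → Bool) : countOnes x ≤ n := by
  rw [countOnes]
  calc (Finset.univ.filter fun i => x i = true).card
      ≤ (Finset.univ : Finset (Fin n)).card := Finset.card_filter_le _ _
    _ = n := by simp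

lemma mulVec_injective {M : Matrix (Fin d) (Fin d) ℂ}
    (hM : M ∈ Matrix.unitaryGroup (Fin d) ℂ) :
    Function.Injective (fun v : Fin d → ℂ => M.mulVec v) := by
  have h1 : star M * M = 1 := hM.1
  intro a b hab
  have := congrArg (fun w => (star M).mulVec w) hab
  simpa [Matrix.mulVec_mulVec, h1, Matrix.one_mulVec] using this

/-- Main lemma: width at least `k+1`. -/
lemma width_lb (n k d : ℕ) (hk : k ≤ n)
    (U : Fin n → Bool → Matrix (Fin d) (Fin d) ℂ)
    (hU : IsUnitaryFamily U)
    (π : Equiv.Perm (Fin n)) (init : Fin d → ℂ) (hinit : NormalizedInit init)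
    (acc : Finset (Fin d))
    (hcomp : nuComputes U π init acc (EXACT n k)) :
    k + 1 ≤ d := by
  classical
  have hinit0 : init ≠ 0 := by
    intro h
    rw [NormalizedInit, h] at hinit
    simp at hinit
  -- the key independent family
  have key : ∀ j, j ≤ k →
      LinearIndependent ℂ (fun r : Fin (j+1) =>
        pre U init (fun i => decide ((i : ℕ) < (r : ℕ))) j) := by
    intro j
    induction j with
    | zero =>
        intro _
        haveI : Unique (Fin (0 + 1)) := inferInstanceAs (Unique (Fin 1))
        apply linearIndependent_unique_iff.mpr
        simpa [pre_zero] using hinit0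
    | succ j ih =>
        intro hjk
        have hjk' : j ≤ k := Nat.le_of_succ_le hjk
        have hjn : j < n := lt_of_lt_of_le hjk hk
        have hLIj := ih hjk'
        set g : Fin (j+1) → (Fin d → ℂ) := fun r =>
          pre U init (fun i => decide ((i : ℕ) < (r : ℕ))) (j+1) with hg
        set x : Fin d → ℂ := pre U init (fun i => decide ((i : ℕ) < j + 1)) (j+1) with hx
        have hfam : (fun r : Fin (j+2) =>
            pre U init (fun i => decide ((i : ℕ) < (r : ℕ))) (j+1)) = Fin.snoc g x := by
          funext r
          refine Fin.lastCases ?_ ?_ r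
          · simp only [Fin.snoc_last, Fin.val_last, hx]
          · intro r'
            simp only [Fin.snoc_castSucc, Fin.coe_castSucc, hg]
        rw [hfam, linearIndependent_fin_snoc]
        constructor
        · -- g is the image of the previous family under an injective map
          have hgeq : g = (Matrix.mulVecLin (U ⟨j, hjn⟩ false)) ∘
              (fun r : Fin (j+1) => pre U init (fun i => decide ((i : ℕ) < (r : ℕ))) j) := by
            funext r
            have h1 := pre_succ U init (fun i : Fin n => decide ((i : ℕ) < (r : ℕ))) hjn
            have h2 : decide (((⟨j, hjn⟩ : Fin n) : ℕ) < (r : ℕ)) = false := by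
              simp only [decide_eq_false_iff_not, not_lt]
              exact Nat.le_of_lt_succ r.isLt
            simp only [hg, Function.comp_apply, Matrix.mulVecLin_apply, h1, h2]
          rw [hgeq]
          exact hLIj.map' (Matrix.mulVecLin (U ⟨j, hjn⟩ false))
            (LinearMap.ker_eq_bot.mpr (mulVec_injective (hU ⟨j, hjn⟩ false)))
        · -- x is not in the span of g
          intro hmem
          have hmk : j + 1 ≤ k := hjk
          set bitsR : ℕ → Fin n → Bool := fun r i =>
            decide ((i : ℕ) < r ∨ (j + 1 ≤ (i : ℕ) ∧ (i : ℕ) < k)) with hbitsR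
          have hcount : ∀ r, r ≤ j + 1 →
              countOnes (fun i => bitsR r (π.symm i)) = r + (k - (j+1)) := by
            intro r hr
            rw [countOnes_comp_symm, hbitsR]
            rw [countOnes_decide (fun i => i < r ∨ (j + 1 ≤ i ∧ i < k))]
            have hset : (Finset.range n).filter (fun i => i < r ∨ (j + 1 ≤ i ∧ i < k))
                = Finset.range r ∪ Finset.Ico (j+1) k := by
              ext i
              simp only [Finset.mem_filter, Finset.mem_range, Finset.mem_union, Finset.mem_Ico]
              have hrn : r ≤ n := le_trans hr (le_trans hmk hk)
              omega
            rw [hset, Finset.card_union_of_disjoint]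
            · simp [Nat.card_Ico]
            · rw [Finset.disjoint_left]
              intro a ha hb
              simp only [Finset.mem_range] at ha
              simp only [Finset.mem_Ico] at hb
              omega
          set Msuf := suf U (bitsR (j+1)) (j+1) with hMsuf
          have hsplit : ∀ r, r ≤ j + 1 →
              nuRun U π init (fun i => bitsR r (π.symm i)) =
                Msuf.mulVec (pre U init (bitsR r) (j+1)) := by
            intro r hr
            have hsuf : suf U (bitsR r) (j+1) = suf U (bitsR (j+1)) (j+1) := by
              apply suf_congr
              intro i hi
              simp only [hbitsR, decide_eq_decide]
              omega
            rw [nuRun_eq U π init (bitsR r) (j+1), hsuf, hMsuf]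
          have hpre : ∀ r : Fin (j+1),
              pre U init (bitsR (r : ℕ)) (j+1) = g r := by
            intro r
            have hrlt : (r : ℕ) < j + 1 := r.isLt
            simp only [hg]
            apply pre_congr
            intro i hi
            simp only [hbitsR, decide_eq_decide]
            omega
          have hprex : pre U init (bitsR (j+1)) (j+1) = x := by
            simp only [hx]
            apply pre_congr
            intro i hi
            simp only [hbitsR, decide_eq_decide]
            omega
          have hacc : nuAccepts U π init acc (fun i => bitsR (j+1) (π.symm i)) := by
            rw [hcomp]
            rw [EXACT, decide_eq_true_eq, hcount (j+1) le_rfl]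
            omega
          obtain ⟨q, hq, hqne⟩ := hacc
          have hrej : ∀ r : Fin (j+1),
              nuRun U π init (fun i => bitsR (r : ℕ) (π.symm i)) q = 0 := by
            intro r
            have hrm : (r : ℕ) ≤ j + 1 := le_of_lt r.isLt
            by_contra hne
            have hA : nuAccepts U π init acc (fun i => bitsR (r : ℕ) (π.symm i)) := ⟨q, hq, hne⟩
            rw [hcomp, EXACT, decide_eq_true_eq, hcount (r : ℕ) hrm] at hA
            have hrlt : (r : ℕ) < j + 1 := r.isLt
            omega
          set φ : (Fin d → ℂ) →ₗ[ℂ] ℂ :=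
            (LinearMap.proj q).comp (Matrix.mulVecLin Msuf) with hφ
          have hφg : ∀ r : Fin (j+1), φ (g r) = 0 := by
            intro r
            have h0 := hrej r
            rw [hsplit (r : ℕ) (le_of_lt r.isLt), hpre r] at h0
            simpa [hφ, Matrix.mulVecLin_apply] using h0
          have hφx : φ x ≠ 0 := by
            have h0 := hqne
            rw [hsplit (j+1) le_rfl, hprex] at h0
            simpa [hφ, Matrix.mulVecLin_apply] using h0
          apply hφx
          have hsub : Submodule.span ℂ (Set.range g) ≤ LinearMap.ker φ := by
            rw [Submodule.span_le]
            rintro _ ⟨r, rfl⟩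
            exact hφg r
          exact hsub hmem
  have hLI := key k le_rfl
  have := hLI.fintype_card_le_finrank
  simpa using this

end NUOBDDAux

/-- For every `n` and every `k ≤ n`, the width of any nondeterministic unitary OBDD
computing `EXACT_n^k` is at least `max (k+1) (n-k+1)`. -/
theorem nuobdd_exact_lower_bound
    (n k d : ℕ) (hk : k ≤ n)
    (U : Fin n → Bool → Matrix (Fin d) (Fin d) ℂ)
    (hU : IsUnitaryFamily U)
    (π : Equiv.Perm (Fin n)) (init : Fin d → ℂ) (hinit : NormalizedInit init)
    (acc : Finset (Fin d))
    (hcomp : nuComputes U π init acc (EXACT n k)) :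
    max (k + 1) (n - k + 1) ≤ d := by
  classical
  have h1 : k + 1 ≤ d := NUOBDDAux.width_lb n k d hk U hU π init hinit acc hcomp
  -- flipped machine
  set U' : Fin n → Bool → Matrix (Fin d) (Fin d) ℂ := fun j b => U j (!b) with hU'def
  have hU' : IsUnitaryFamily U' := fun j b => hU j (!b)
  have hflip : ∀ x : Fin n → Bool, countOnes (fun i => !(x i)) = n - countOnes x := by
    intro x
    have hle : countOnes x ≤ n := NUOBDDAux.countOnes_le x
    have hsum : countOnes x + countOnes (fun i => !(x i)) = n := by
      rw [countOnes, countOnes]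
      have : (Finset.univ.filter fun i => (!(x i)) = true)
          = Finset.univ.filter fun i => ¬ (x i = true) := by
        ext i; simp
      rw [this]
      simpa using Finset.card_filter_add_card_filter_not
        (s := (Finset.univ : Finset (Fin n))) (p := fun i => x i = true)
    omega
  have hrun : ∀ x : Fin n → Bool, nuRun U' π init x = nuRun U π init (fun i => !(x i)) := by
    intro x
    rw [nuRun, nuRun]
  have hcomp' : nuComputes U' π init acc (EXACT n (n - k)) := by
    intro x
    have h1 : nuAccepts U' π init acc x ↔ nuAccepts U π init acc (fun i => !(x i)) := by
      rw [nuAccepts, nuAccepts, hrun]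
    rw [h1, hcomp]
    rw [EXACT, EXACT, decide_eq_true_eq, decide_eq_true_eq, hflip]
    have hle : countOnes x ≤ n := NUOBDDAux.countOnes_le x
    omega
  have h2 : (n - k) + 1 ≤ d :=
    NUOBDDAux.width_lb n (n - k) d (Nat.sub_le n k) U' hU' π init hinit acc hcomp'
  omega
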